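/- Let $S$ be a commutative ring of prime characteristic $p$, and let $I, J$ be ideals of $S$. Then for all $e \geq 0$, $(I :_S J)^{[p^e]} \subseteq I^{[p^e]} :_S J^{[p^e]}$; moreover if $S$ is a regular ring (so that the Frobenius endomorphism is flat), then equality $(I :_S J)^{[p^e]} = I^{[p^e]} :_S J^{[p^e]}$ holds whenever $J$ is finitely generated. -/

import Mathlib

open TensorProduct LinearMap

/-- Membership in a colon ideal with a spanned second argument. -/
lemma mem_colon_span' {R : Type*} [CommRing R] (K : Ideal R) (s : Set R) (r : R) :
    r ∈ K.colon (Ideal.span s) ↔ ∀ x ∈ s, r * x ∈ K := by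
  rw [Submodule.mem_colon]
  constructor
  · intro h x hx
    simpa [smul_eq_mul] using h x (Ideal.subset_span hx)
  · intro h p hp
    induction hp using Submodule.span_induction with
    | mem x hx => simpa [smul_eq_mul] using h x hx
    | zero => simp
    | add a b _ _ ha hb => rw [smul_add]; exact K.add_mem ha hb
    | smul c a _ ha => rw [smul_comm]; exact Submodule.smul_mem _ c ha

/-- Flat base change of a kernel ideal. -/
lemma mem_map_ker_iff' {R S M : Type*} [CommRing R] [CommRing S] [Algebra R S]
    [Module.Flat R S] [AddCommGroup M] [Module R M] (f : R →ₗ[R] M) (s : S) :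
    s ∈ Ideal.map (algebraMap R S) (LinearMap.ker f) ↔ s ⊗ₜ[R] f 1 = (0 : S ⊗[R] M) := by
  constructor
  · intro hs
    let g : S →ₗ[S] S ⊗[R] M :=
      { toFun := fun t => t ⊗ₜ[R] f 1
        map_add' := fun a b => add_tmul a b (f 1)
        map_smul' := fun c t => by simp [smul_tmul'] }
    have hle : Ideal.map (algebraMap R S) (LinearMap.ker f) ≤ LinearMap.ker g := by
      rw [Ideal.map_le_iff_le_comap]
      intro r hr
      have : (algebraMap R S r) ⊗ₜ[R] f 1 = (0 : S ⊗[R] M) := by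
        rw [Algebra.algebraMap_eq_smul_one, smul_tmul, ← map_smul]
        simp [smul_eq_mul, LinearMap.mem_ker.mp hr]
      rw [Ideal.mem_comap, LinearMap.mem_ker]
      exact this
    exact hle hs
  · intro h
    have exact2 := Module.Flat.lTensor_exact S (f.exact_subtype_ker_map)
    have h1 : (lTensor S f) (s ⊗ₜ[R] (1 : R)) = 0 := by simpa using h
    obtain ⟨y, hy⟩ := (exact2 (s ⊗ₜ[R] (1 : R))).mp h1
    have key : ∀ y : S ⊗[R] (LinearMap.ker f),
        TensorProduct.rid R S (lTensor S (LinearMap.ker f).subtype y)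
          ∈ Ideal.map (algebraMap R S) (LinearMap.ker f) := by
      intro y
      induction y using TensorProduct.induction_on with
      | zero => simp
      | tmul t k =>
          have : TensorProduct.rid R S (lTensor S (LinearMap.ker f).subtype (t ⊗ₜ k))
              = algebraMap R S (k : R) * t := by
            simp [Algebra.smul_def]
          rw [this]
          exact Ideal.mul_mem_right _ _ (Ideal.mem_map_of_mem _ k.2)
      | add a b ha hb =>
          rw [map_add, map_add]
          exact Ideal.add_mem _ ha hb
    have hs : s = TensorProduct.rid R S (s ⊗ₜ[R] (1 : R)) := by simp
    rw [hs, ← hy]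
    exact key y

/-- Flat base change commutes with colon by a finitely generated ideal. -/
lemma map_colon_fin' {R S : Type*} [CommRing R] [CommRing S] (φ : R →+* S) (hφ : φ.Flat)
    (I : Ideal R) {n : ℕ} (x : Fin n → R) :
    Ideal.map φ (I.colon (Ideal.span (Set.range x)))
      = (Ideal.map φ I).colon (Ideal.map φ (Ideal.span (Set.range x))) := by
  letI := φ.toAlgebra
  haveI : Module.Flat R S := hφ
  have halg : algebraMap R S = φ := rfl
  -- the linear map whose kernel is the colon ideal
  let f : R →ₗ[R] (Fin n → R ⧸ I) :=
    LinearMap.pi (fun i => I.mkQ ∘ₗ (LinearMap.lsmul R R (x i)))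
  have hker : LinearMap.ker f = I.colon (Ideal.span (Set.range x)) := by
    ext r
    rw [mem_colon_span']
    constructor
    · intro hr z hz
      obtain ⟨i, rfl⟩ := hz
      have := congrFun (LinearMap.mem_ker.mp hr) i
      simp only [f, LinearMap.pi_apply, LinearMap.comp_apply, LinearMap.lsmul_apply,
        Pi.zero_apply, smul_eq_mul, Submodule.mkQ_apply, Submodule.Quotient.mk_eq_zero] at this
      rwa [mul_comm]
    · intro h
      rw [LinearMap.mem_ker]
      funext i
      simp only [f, LinearMap.pi_apply, LinearMap.comp_apply, LinearMap.lsmul_apply,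
        Pi.zero_apply, smul_eq_mul, Submodule.mkQ_apply, Submodule.Quotient.mk_eq_zero]
      rw [mul_comm]
      exact h (x i) ⟨i, rfl⟩
  ext s
  rw [← hker, ← halg, mem_map_ker_iff' f s]
  have hf1 : f 1 = fun i => Ideal.Quotient.mk I (x i) := by
    funext i; simp [f]
  rw [hf1]
  -- split the tensor over the finite product
  have hsplit : s ⊗ₜ[R] (fun i => Ideal.Quotient.mk I (x i)) = (0 : S ⊗[R] (Fin n → R ⧸ I))
      ↔ ∀ i, s ⊗ₜ[R] (Ideal.Quotient.mk I (x i)) = (0 : S ⊗[R] (R ⧸ I)) := by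
    rw [← (TensorProduct.piRight R S S (fun _ : Fin n => R ⧸ I)).map_eq_zero_iff]
    have : TensorProduct.piRight R S S (fun _ : Fin n => R ⧸ I)
        (s ⊗ₜ[R] fun i => Ideal.Quotient.mk I (x i))
        = fun i => s ⊗ₜ[R] (Ideal.Quotient.mk I (x i)) := by
      simp [TensorProduct.piRight]
    rw [this, funext_iff]
    simp
  rw [hsplit]
  -- each component is a membership condition
  have hcomp : ∀ i, (s ⊗ₜ[R] (Ideal.Quotient.mk I (x i)) = (0 : S ⊗[R] (R ⧸ I)))
      ↔ s * φ (x i) ∈ Ideal.map φ I := by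
    intro i
    have := mem_map_ker_iff' (M := R ⧸ I) I.mkQ (s * φ (x i))
    rw [Submodule.ker_mkQ, halg] at this
    have h2 : (s * φ (x i)) ⊗ₜ[R] (I.mkQ 1) = s ⊗ₜ[R] (Ideal.Quotient.mk I (x i)) := by
      have h1 : s * φ (x i) = (x i) • s := by
        rw [Algebra.smul_def, halg, mul_comm]
      rw [h1, smul_tmul]
      congr 1
      rw [← map_smul, smul_eq_mul, mul_one]
      rfl
    rw [this, h2]
  simp only [hcomp]
  rw [halg]
  -- right hand side
  rw [Ideal.map_span, ← Set.range_comp]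
  rw [mem_colon_span' (Ideal.map φ I) (Set.range (φ ∘ x)) s]
  constructor
  · rintro h _ ⟨i, rfl⟩; exact h i
  · intro h i; exact h _ ⟨i, rfl⟩

/-- Frobenius powers and colon ideals: the containment
`(I : J)^{[p^e]} ⊆ I^{[p^e]} : J^{[p^e]}` always holds, and when the (iterated) Frobenius of `S`
is flat (e.g. `S` regular) and `J` is finitely generated, equality holds. -/
theorem defect_fpt_stmt6 {S : Type*} [CommRing S] (p : ℕ) (hp : p.Prime) [CharP S p]
    [ExpChar S p] (I J : Ideal S) (e : ℕ) :
    (Ideal.span ((fun x => x ^ p ^ e) '' ((I.colon J : Ideal S) : Set S))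
      ≤ (Ideal.span ((fun x => x ^ p ^ e) '' (I : Set S))).colon
          (Ideal.span ((fun x => x ^ p ^ e) '' (J : Set S)))) ∧
    (RingHom.Flat (iterateFrobenius S p e) → J.FG →
      Ideal.span ((fun x => x ^ p ^ e) '' ((I.colon J : Ideal S) : Set S))
        = (Ideal.span ((fun x => x ^ p ^ e) '' (I : Set S))).colon
            (Ideal.span ((fun x => x ^ p ^ e) '' (J : Set S)))) := by
  constructor
  · -- easy containment
    rw [Ideal.span_le]
    rintro _ ⟨a, ha, rfl⟩
    rw [SetLike.mem_coe, mem_colon_span']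
    rintro _ ⟨b, hb, rfl⟩
    have hab : a * b ∈ I := by
      simpa [smul_eq_mul] using Submodule.mem_colon.mp ha b hb
    have : (a : S) ^ p ^ e * b ^ p ^ e = (a * b) ^ p ^ e := (mul_pow a b (p ^ e)).symm
    rw [this]
    exact Ideal.subset_span ⟨a * b, hab, rfl⟩
  · intro hflat hfg
    obtain ⟨n, x, hx⟩ := Submodule.fg_iff_exists_fin_generating_family.mp hfg
    have himg : ∀ K : Ideal S,
        Ideal.span ((fun x => x ^ p ^ e) '' (K : Set S)) = Ideal.map (iterateFrobenius S p e) K := by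
      intro K
      have : (fun x => x ^ p ^ e) '' (K : Set S) = (iterateFrobenius S p e) '' (K : Set S) :=
        Set.image_congr' (fun y => (iterateFrobenius_def p e y).symm)
      rw [this]
      rfl
    rw [himg, himg, himg, ← hx]
    exact map_colon_fin' (iterateFrobenius S p e) hflat I x
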